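/- For four modes with k₁+k₂+k₃+k₄ = 0, the paired Jacobiator of the YM bracket equals the sum of three pairings of YM brackets: B([[ξ₁,ξ₂]_YM,ξ₃]_YM + [[ξ₂,ξ₃]_YM,ξ₁]_YM + [[ξ₃,ξ₁]_YM,ξ₂]_YM, ξ₄) = B([ξ₁,ξ₂]_YM, [ξ₃,ξ₄]_YM) + B([ξ₂,ξ₃]_YM, [ξ₁,ξ₄]_YM) + B([ξ₃,ξ₁]_YM, [ξ₂,ξ₄]_YM). -/

import Mathlib

namespace Stmt9

variable {V : Type*} [AddCommGroup V] [Module ℝ V]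

/-- The YM bracket of modes. -/
def ymMode (B : LinearMap.BilinForm ℝ V) (p q : V × V) : V × V :=
  ((2 * B p.1 q.2) • q.1 - (2 * B q.1 p.2) • p.1 + B p.1 q.1 • (p.2 - q.2)
    + B p.1 p.2 • q.1 - B q.1 q.2 • p.1, p.2 + q.2)

/-- For four modes with `k₁+k₂+k₃+k₄ = 0`, the paired Jacobiator of the YM
bracket equals the sum of the three pairings of YM brackets. -/
theorem ym_jacobiator_as_pairings (B : LinearMap.BilinForm ℝ V) (hB : B.IsSymm)
    (ξ₁ k₁ ξ₂ k₂ ξ₃ k₃ ξ₄ k₄ : V) (h : k₁ + k₂ + k₃ + k₄ = 0) :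
    B ((ymMode B (ymMode B (ξ₁, k₁) (ξ₂, k₂)) (ξ₃, k₃)).1
        + (ymMode B (ymMode B (ξ₂, k₂) (ξ₃, k₃)) (ξ₁, k₁)).1
        + (ymMode B (ymMode B (ξ₃, k₃) (ξ₁, k₁)) (ξ₂, k₂)).1) ξ₄
      = B (ymMode B (ξ₁, k₁) (ξ₂, k₂)).1 (ymMode B (ξ₃, k₃) (ξ₄, k₄)).1
        + B (ymMode B (ξ₂, k₂) (ξ₃, k₃)).1 (ymMode B (ξ₁, k₁) (ξ₄, k₄)).1
        + B (ymMode B (ξ₃, k₃) (ξ₁, k₁)).1 (ymMode B (ξ₂, k₂) (ξ₄, k₄)).1 := by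
  have hk : k₄ = -(k₁ + k₂ + k₃) := by
    rw [eq_neg_iff_add_eq_zero, ← h]; abel
  subst hk
  have h_10 : B k₁ ξ₁ = B ξ₁ k₁ := (hB.eq ξ₁ k₁).symm
  have h_20 : B ξ₂ ξ₁ = B ξ₁ ξ₂ := (hB.eq ξ₁ ξ₂).symm
  have h_30 : B k₂ ξ₁ = B ξ₁ k₂ := (hB.eq ξ₁ k₂).symm
  have h_40 : B ξ₃ ξ₁ = B ξ₁ ξ₃ := (hB.eq ξ₁ ξ₃).symm
  have h_50 : B k₃ ξ₁ = B ξ₁ k₃ := (hB.eq ξ₁ k₃).symm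
  have h_60 : B ξ₄ ξ₁ = B ξ₁ ξ₄ := (hB.eq ξ₁ ξ₄).symm
  have h_21 : B ξ₂ k₁ = B k₁ ξ₂ := (hB.eq k₁ ξ₂).symm
  have h_31 : B k₂ k₁ = B k₁ k₂ := (hB.eq k₁ k₂).symm
  have h_41 : B ξ₃ k₁ = B k₁ ξ₃ := (hB.eq k₁ ξ₃).symm
  have h_51 : B k₃ k₁ = B k₁ k₃ := (hB.eq k₁ k₃).symm
  have h_61 : B ξ₄ k₁ = B k₁ ξ₄ := (hB.eq k₁ ξ₄).symm
  have h_32 : B k₂ ξ₂ = B ξ₂ k₂ := (hB.eq ξ₂ k₂).symm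
  have h_42 : B ξ₃ ξ₂ = B ξ₂ ξ₃ := (hB.eq ξ₂ ξ₃).symm
  have h_52 : B k₃ ξ₂ = B ξ₂ k₃ := (hB.eq ξ₂ k₃).symm
  have h_62 : B ξ₄ ξ₂ = B ξ₂ ξ₄ := (hB.eq ξ₂ ξ₄).symm
  have h_43 : B ξ₃ k₂ = B k₂ ξ₃ := (hB.eq k₂ ξ₃).symm
  have h_53 : B k₃ k₂ = B k₂ k₃ := (hB.eq k₂ k₃).symm
  have h_63 : B ξ₄ k₂ = B k₂ ξ₄ := (hB.eq k₂ ξ₄).symm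
  have h_54 : B k₃ ξ₃ = B ξ₃ k₃ := (hB.eq ξ₃ k₃).symm
  have h_64 : B ξ₄ ξ₃ = B ξ₃ ξ₄ := (hB.eq ξ₃ ξ₄).symm
  have h_65 : B ξ₄ k₃ = B k₃ ξ₄ := (hB.eq k₃ ξ₄).symm
  simp only [ymMode, map_add, map_sub, map_smul, map_neg, LinearMap.add_apply,
    LinearMap.sub_apply, LinearMap.smul_apply, LinearMap.neg_apply, smul_eq_mul,
    h_10, h_20, h_30, h_40, h_50, h_60, h_21, h_31, h_41, h_51, h_61, h_32, h_42, h_52, h_62, h_43, h_53, h_63, h_54, h_64, h_65]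
  ring


end Stmt9
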